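/- Suppose σ is a nonnegative random variable such that limsup_{t→0+} t · log P(σ ≤ t) ≤ -c for some c > 0. Then limsup_{λ→∞} λ^{-1/2} log E[exp(-λσ)] ≤ -2√c. -/

import Mathlib

open MeasureTheory Filter

set_option maxHeartbeats 2000000 in
/-- If `limsup_{t→0+} t log P(σ ≤ t) ≤ -c` for some `c > 0`, then
`limsup_{λ→∞} λ^{-1/2} log E[exp(-λσ)] ≤ -2√c`. -/
theorem stmt_3 {Ω : Type*} [MeasurableSpace Ω] (P : Measure Ω) [IsProbabilityMeasure P]
    (σ : Ω → ℝ) (hσmeas : Measurable σ) (hσnonneg : ∀ ω, 0 ≤ σ ω)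
    (c : ℝ) (hc : 0 < c)
    (h : limsup (fun t : ℝ => t * Real.log (P {ω | σ ω ≤ t}).toReal) (nhdsWithin 0 (Set.Ioi 0)) ≤ -c) :
    limsup (fun lam : ℝ => (Real.sqrt lam)⁻¹ * Real.log (∫ ω, Real.exp (-lam * σ ω) ∂P)) atTop ≤
      -2 * Real.sqrt c := by
  set G : ℝ → ℝ := fun t => (P {ω | σ ω ≤ t}).toReal with hGdef
  set φ : ℝ → ℝ := fun t => t * Real.log (G t) with hφdef
  set F : ℝ → ℝ := fun lam => (Real.sqrt lam)⁻¹ * Real.log (∫ ω, Real.exp (-lam * σ ω) ∂P)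
    with hFdef
  have hGnonneg : ∀ t, 0 ≤ G t := fun t => ENNReal.toReal_nonneg
  have hGle1 : ∀ t, G t ≤ 1 := by
    intro t
    have h1 : P {ω | σ ω ≤ t} ≤ 1 := prob_le_one
    simpa using ENNReal.toReal_mono ENNReal.one_ne_top h1
  -- G positive whenever φ is negative
  have hGpos_of_neg : ∀ t : ℝ, φ t < 0 → 0 < G t := by
    intro t ht
    rcases (hGnonneg t).lt_or_eq with h' | h'
    · exact h'
    · exfalso
      rw [hφdef] at ht
      simp only [← h', Real.log_zero, mul_zero] at ht
      exact lt_irrefl 0 ht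
  -- integrability of exp(-λσ)
  have hint : ∀ lam : ℝ, 0 ≤ lam → Integrable (fun ω => Real.exp (-lam * σ ω)) P := by
    intro lam hlam
    refine (integrable_const (1 : ℝ)).mono' ?_ ?_
    · exact (Real.measurable_exp.comp (measurable_const.mul hσmeas)).aestronglyMeasurable
    · refine Eventually.of_forall fun ω => ?_
      rw [Real.norm_eq_abs, abs_of_pos (Real.exp_pos _)]
      refine Real.exp_le_one_iff.mpr ?_
      have := mul_nonneg hlam (hσnonneg ω)
      linarith
  have hEpos : ∀ lam : ℝ, 0 ≤ lam → 0 < ∫ ω, Real.exp (-lam * σ ω) ∂P := by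
    intro lam hlam
    exact integral_exp_pos (f := fun ω => -lam * σ ω) (by simpa using hint lam hlam)
  -- the set defining the limsup hypothesis
  set S : Set ℝ := {a : ℝ | ∀ᶠ t in nhdsWithin 0 (Set.Ioi 0), φ t ≤ a} with hSdef
  have hS0 : sInf S ≤ -c := by
    rw [limsup_eq] at h
    exact h
  have hSbdd : BddBelow S := by
    by_contra hb
    rw [Real.sInf_of_not_bddBelow hb] at hS0
    linarith
  have hSne : S.Nonempty := by
    by_contra hn
    rw [Set.not_nonempty_iff_eq_empty] at hn
    rw [hn, Real.sInf_empty] at hS0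
    linarith
  -- eventual upper bound on φ
  have hev : ∀ c' : ℝ, c' < c → ∀ᶠ t in nhdsWithin 0 (Set.Ioi 0), φ t ≤ -c' := by
    intro c' hc'
    obtain ⟨a, haS, ha⟩ := exists_lt_of_csInf_lt hSne (show sInf S < -c' by linarith)
    have haS' : ∀ᶠ t in nhdsWithin 0 (Set.Ioi 0), φ t ≤ a := haS
    exact haS'.mono fun t ht => le_trans ht ha.le
  -- quantitative bound on G near 0
  have hGbound : ∀ c' : ℝ, 0 < c' → c' < c →
      ∃ δ > 0, ∀ t : ℝ, 0 < t → t < δ → G t ≤ Real.exp (-c' / t) := by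
    intro c' hc'0 hc'c
    have hevt := hev c' hc'c
    rw [eventually_nhdsWithin_iff, Metric.eventually_nhds_iff] at hevt
    obtain ⟨δ, hδ0, hδ⟩ := hevt
    refine ⟨δ, hδ0, fun t ht htδ => ?_⟩
    have hφt : φ t ≤ -c' := by
      refine hδ ?_ ht
      rw [Real.dist_eq, sub_zero, abs_of_pos ht]
      exact htδ
    have hGt : 0 < G t := hGpos_of_neg t (lt_of_le_of_lt hφt (by linarith))
    have hlog : Real.log (G t) ≤ -c' / t := by
      rw [le_div_iff₀ ht]
      have hφt' : t * Real.log (G t) ≤ -c' := hφt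
      linarith [mul_comm t (Real.log (G t))]
    calc G t = Real.exp (Real.log (G t)) := (Real.exp_log hGt).symm
      _ ≤ Real.exp (-c' / t) := Real.exp_le_exp.mpr hlog
  -- coboundedness: frequent lower bound on F
  obtain ⟨b, hb⟩ := hSbdd
  have hfreqφ : ∃ᶠ t in nhdsWithin 0 (Set.Ioi 0), b - 1 ≤ φ t := by
    by_contra hcon
    rw [not_frequently] at hcon
    have : (b - 1) ∈ S := hcon.mono fun t ht => by linarith [not_le.mp ht]
    have := hb this
    linarith
  have hcobdd : IsCoboundedUnder (· ≤ ·) atTop F := by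
    refine IsCoboundedUnder.of_frequently_ge (a := b - 2) ?_
    rw [frequently_atTop]
    intro Λ
    set M : ℝ := max Λ 1 with hM
    have hM1 : (1:ℝ) ≤ M := le_max_right _ _
    have hM0 : (0:ℝ) < M := by linarith
    have hsM : 0 < Real.sqrt M := Real.sqrt_pos.mpr hM0
    -- find a good small t
    have hfr2 : ∃ᶠ t in nhdsWithin 0 (Set.Ioi 0),
        ((b - 1 ≤ φ t ∧ φ t ≤ -(c/2)) ∧ t ∈ Set.Ioi (0:ℝ)) ∧ t < (Real.sqrt M)⁻¹ := by
      refine (((hfreqφ.and_eventually (hev (c/2) (by linarith))).and_eventually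
        self_mem_nhdsWithin).and_eventually ?_)
      refine eventually_nhdsWithin_of_eventually_nhds ?_
      exact Filter.Tendsto.eventually_lt_const (by positivity) tendsto_id
    obtain ⟨t, ⟨⟨hφlow, hφup⟩, ht0⟩, htM⟩ := hfr2.exists
    rw [Set.mem_Ioi] at ht0
    set lam : ℝ := (t ^ 2)⁻¹ with hlam
    have hlampos : 0 < lam := by positivity
    have hsqrtlam : Real.sqrt lam = t⁻¹ := by
      rw [hlam, Real.sqrt_inv, Real.sqrt_sq ht0.le]
    refine ⟨lam, ?_, ?_⟩
    · -- lam ≥ Λ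
      have ht2 : t ^ 2 < M⁻¹ := by
        have h1 : t ^ 2 < ((Real.sqrt M)⁻¹) ^ 2 := by
          exact pow_lt_pow_left₀ htM ht0.le (by norm_num)
        have h2 : ((Real.sqrt M)⁻¹) ^ 2 = M⁻¹ := by
          rw [inv_pow, Real.sq_sqrt hM0.le]
        linarith [h2 ▸ h1]
      have : M < lam := by
        rw [hlam]
        have ht2pos : 0 < t ^ 2 := by positivity
        calc M = (M⁻¹)⁻¹ := by rw [inv_inv]
          _ < (t ^ 2)⁻¹ := by
              exact inv_strictAnti₀ ht2pos ht2
      linarith [le_max_left Λ 1]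
    · -- b - 2 ≤ F lam
      have hGt : 0 < G t := hGpos_of_neg t (lt_of_le_of_lt hφup (by linarith))
      have hGlow : Real.exp ((b - 1) / t) ≤ G t := by
        have : (b - 1) / t ≤ Real.log (G t) := by
          rw [div_le_iff₀ ht0]
          have hφlow' : b - 1 ≤ t * Real.log (G t) := hφlow
          linarith [mul_comm t (Real.log (G t))]
        calc Real.exp ((b-1)/t) ≤ Real.exp (Real.log (G t)) := Real.exp_le_exp.mpr this
          _ = G t := Real.exp_log hGt
      -- lower bound on integral
      have hmeasset : MeasurableSet {ω | σ ω ≤ t} := measurableSet_le hσmeas measurable_const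
      have hlow1 : Real.exp (-lam * t) * G t ≤ ∫ ω in {ω | σ ω ≤ t}, Real.exp (-lam * σ ω) ∂P := by
        refine setIntegral_ge_of_const_le_real hmeasset (measure_ne_top P _) ?_
          ((hint lam hlampos.le).integrableOn)
        intro ω hω
        refine Real.exp_le_exp.mpr ?_
        have hσω : σ ω ≤ t := hω
        have := mul_le_mul_of_nonneg_left hσω hlampos.le
        linarith
      have hlow2 : ∫ ω in {ω | σ ω ≤ t}, Real.exp (-lam * σ ω) ∂P ≤
          ∫ ω, Real.exp (-lam * σ ω) ∂P :=
        setIntegral_le_integral (hint lam hlampos.le)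
          (Eventually.of_forall fun ω => (Real.exp_pos _).le)
      have hElow : Real.exp ((b - 2) / t) ≤ ∫ ω, Real.exp (-lam * σ ω) ∂P := by
        have h1 : Real.exp (-lam * t) * Real.exp ((b-1)/t) = Real.exp ((b-2)/t) := by
          rw [← Real.exp_add]
          congr 1
          rw [hlam]
          field_simp
          ring
        calc Real.exp ((b-2)/t) = Real.exp (-lam * t) * Real.exp ((b-1)/t) := h1.symm
          _ ≤ Real.exp (-lam * t) * G t := by
              exact mul_le_mul_of_nonneg_left hGlow (Real.exp_pos _).le
          _ ≤ _ := le_trans hlow1 hlow2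
      have hlogE : (b - 2) / t ≤ Real.log (∫ ω, Real.exp (-lam * σ ω) ∂P) := by
        rw [Real.le_log_iff_exp_le (hEpos lam hlampos.le)]
        exact hElow
      rw [hFdef]
      simp only
      rw [hsqrtlam, inv_inv]
      calc b - 2 = t * ((b - 2) / t) := by field_simp
        _ ≤ t * Real.log (∫ ω, Real.exp (-lam * σ ω) ∂P) :=
            mul_le_mul_of_nonneg_left hlogE ht0.le
  -- main eventual estimate
  have main : ∀ ε : ℝ, 0 < ε → ∀ᶠ lam in atTop, F lam ≤ -2 * Real.sqrt c + ε := by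
    intro ε hε
    set s : ℝ := Real.sqrt c with hsdef
    have hs : 0 < s := Real.sqrt_pos.mpr hc
    set r : ℝ := min (s / 4) (ε / 8) with hrdef
    have hr0 : 0 < r := lt_min (by linarith) (by linarith)
    have hr1 : r ≤ s / 4 := min_le_left _ _
    have hr2 : r ≤ ε / 8 := min_le_right _ _
    set c' : ℝ := (s - r) ^ 2 with hc'def
    have hsr : 0 < s - r := by linarith
    have hs2r : 0 < s - 2 * r := by linarith
    have hc'pos : 0 < c' := by positivity
    have hceq : c = s ^ 2 := (Real.sq_sqrt hc.le).symm
    have hc'c : c' < c := by rw [hceq, hc'def]; nlinarith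
    obtain ⟨δ, hδ0, hδ⟩ := hGbound c' hc'pos hc'c
    set θ : ℝ := 2 * r with hθdef
    have hθ0 : 0 < θ := by linarith
    filter_upwards [eventually_ge_atTop (1 : ℝ), eventually_ge_atTop (4 * c' / δ ^ 2),
      eventually_ge_atTop ((27 * (1 + δ) / θ ^ 3) ^ 2)] with lam hl1 hl2 hl3
    simp only [hFdef]
    have hlam0 : (0 : ℝ) < lam := by linarith
    have hsl : 0 < Real.sqrt lam := Real.sqrt_pos.mpr hlam0
    set E : ℝ := ∫ ω, Real.exp (-lam * σ ω) ∂P with hEdef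
    have hEp : 0 < E := hEpos lam hlam0.le
    set K : ℝ := Real.exp (-(2 * Real.sqrt (c' * lam))) with hKdef
    set a : ℝ := Real.exp (-(lam * δ)) with hadef
    have ha0 : 0 < a := Real.exp_pos _
    have ha1 : a < 1 := by
      rw [hadef]
      apply Real.exp_lt_one_iff.mpr
      have := mul_pos hlam0 hδ0
      linarith
    have haa1 : a ≤ 1 := ha1.le
    set g : ℝ → ℝ := fun u => (P {ω | u ≤ Real.exp (-lam * σ ω)}).toReal with hgdef
    have hganti : Antitone g := by
      intro u v huv
      exact ENNReal.toReal_mono (measure_ne_top P _)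
        (measure_mono fun ω hω => le_trans huv hω)
    have hgnn : ∀ u, 0 ≤ g u := fun u => ENNReal.toReal_nonneg
    have hgle1 : ∀ u, g u ≤ 1 := fun u => by
      simpa using ENNReal.toReal_mono ENNReal.one_ne_top prob_le_one
    have hgint : IntegrableOn g (Set.Ioc (0 : ℝ) 1) := by
      refine Measure.integrableOn_of_bounded (M := 1) measure_Ioc_lt_top.ne
        hganti.measurable.aestronglyMeasurable ?_
      refine Eventually.of_forall fun u => ?_
      rw [Real.norm_eq_abs, abs_of_nonneg (hgnn u)]
      exact hgle1 u
    have hlayer : E = ∫ u in Set.Ioc (0 : ℝ) 1, g u := by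
      rw [hEdef]
      exact (hint lam hlam0.le).integral_eq_integral_Ioc_meas_le
        (Eventually.of_forall fun ω => (Real.exp_pos _).le)
        (Eventually.of_forall fun ω => by
          refine Real.exp_le_one_iff.mpr ?_
          have := mul_nonneg hlam0.le (hσnonneg ω)
          linarith)
    have hsplit : ∫ u in Set.Ioc (0 : ℝ) 1, g u
        = (∫ u in Set.Ioc (0 : ℝ) a, g u) + ∫ u in Set.Ioc a 1, g u := by
      rw [← Set.Ioc_union_Ioc_eq_Ioc ha0.le haa1]
      exact setIntegral_union (Set.Ioc_disjoint_Ioc_of_le le_rfl) measurableSet_Ioc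
        (hgint.mono_set (Set.Ioc_subset_Ioc_right haa1))
        (hgint.mono_set (Set.Ioc_subset_Ioc_left ha0.le))
    have hpiece1 : ∫ u in Set.Ioc (0 : ℝ) a, g u ≤ a := by
      have h1 : ∫ u in Set.Ioc (0 : ℝ) a, g u ≤ ∫ _u in Set.Ioc (0 : ℝ) a, (1 : ℝ) :=
        setIntegral_mono_on (hgint.mono_set (Set.Ioc_subset_Ioc_right haa1))
          (integrableOn_const measure_Ioc_lt_top.ne) measurableSet_Ioc
          fun u _ => hgle1 u
      have h2 : ∫ _u in Set.Ioc (0 : ℝ) a, (1 : ℝ) = a := by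
        simp [Real.volume_Ioc, ENNReal.toReal_ofReal ha0.le, ha0.le]
      linarith
    have hpt : ∀ u ∈ Set.Ioo a 1, g u ≤ K * u⁻¹ := by
      intro u hu
      obtain ⟨hau, hu1⟩ := hu
      have hu0 : 0 < u := lt_trans ha0 hau
      have hlogu_neg : Real.log u < 0 := Real.log_neg hu0 hu1
      set t : ℝ := -Real.log u / lam with htdef
      have ht0 : 0 < t := div_pos (by linarith) hlam0
      have hloga : Real.log a = -(lam * δ) := by rw [hadef, Real.log_exp]
      have hlogau : -(lam * δ) < Real.log u := by
        rw [← hloga]; exact Real.log_lt_log ha0 hau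
      have htδ : t < δ := by
        rw [htdef, div_lt_iff₀ hlam0]
        linarith [mul_comm lam δ]
      have hset : {ω | u ≤ Real.exp (-lam * σ ω)} = {ω | σ ω ≤ t} := by
        ext ω
        simp only [Set.mem_setOf_eq]
        rw [← Real.log_le_iff_le_exp hu0, htdef, le_div_iff₀ hlam0]
        constructor <;> intro h' <;> linarith [mul_comm lam (σ ω), mul_comm (σ ω) lam]
      have hgu : g u ≤ Real.exp (-c' / t) := by
        have : g u = G t := by rw [hgdef, hGdef]; simp only; rw [hset]
        rw [this]
        exact hδ t ht0 htδ
      have hAM : 2 * Real.sqrt (c' * lam) ≤ lam * t + c' / t := by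
        have h1 : Real.sqrt (c' * lam) = Real.sqrt (lam * t) * Real.sqrt (c' / t) := by
          rw [← Real.sqrt_mul (by positivity)]
          congr 1
          field_simp
        linarith [Real.sq_sqrt (show (0 : ℝ) ≤ lam * t by positivity),
          Real.sq_sqrt (show (0 : ℝ) ≤ c' / t by positivity),
          sq_nonneg (Real.sqrt (lam * t) - Real.sqrt (c' / t))]
      have huinv : u⁻¹ = Real.exp (lam * t) := by
        rw [htdef]
        have heq : lam * (-Real.log u / lam) = -Real.log u := by
          field_simp
        rw [heq, Real.exp_neg, Real.exp_log hu0]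
      calc g u ≤ Real.exp (-c' / t) := hgu
        _ ≤ Real.exp (-(2 * Real.sqrt (c' * lam)) + lam * t) := by
            apply Real.exp_le_exp.mpr
            rw [neg_div]
            linarith [hAM]
        _ = K * u⁻¹ := by rw [Real.exp_add, hKdef, huinv]
    have hKint : IntegrableOn (fun u => K * u⁻¹) (Set.Ioc a 1) := by
      have h1 : IntervalIntegrable (fun u : ℝ => u⁻¹) volume a 1 := by
        refine intervalIntegral.intervalIntegrable_inv ?_ continuousOn_id
        intro x hx
        rw [Set.uIcc_of_le haa1] at hx
        exact ne_of_gt (lt_of_lt_of_le ha0 hx.1)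
      rw [intervalIntegrable_iff_integrableOn_Ioc_of_le haa1] at h1
      exact h1.const_mul K
    have hae1 : ∀ᵐ u ∂(volume.restrict (Set.Ioc a 1)), u ≠ 1 := by
      have h0 : (volume.restrict (Set.Ioc a 1)) {(1 : ℝ)} = 0 := by
        rw [Measure.restrict_apply (measurableSet_singleton 1)]
        exact measure_mono_null Set.inter_subset_left (by simp)
      have h1 := measure_eq_zero_iff_ae_notMem.mp h0
      simpa using h1
    have hpiece2 : ∫ u in Set.Ioc a 1, g u ≤ K * (lam * δ) := by
      have hmono : ∫ u in Set.Ioc a 1, g u ≤ ∫ u in Set.Ioc a 1, K * u⁻¹ := by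
        refine integral_mono_ae (hgint.mono_set (Set.Ioc_subset_Ioc_left ha0.le)) hKint ?_
        filter_upwards [ae_restrict_mem measurableSet_Ioc, hae1] with u hu hne
        exact hpt u ⟨hu.1, lt_of_le_of_ne hu.2 hne⟩
      have hcalc : ∫ u in Set.Ioc a 1, K * u⁻¹ = K * (lam * δ) := by
        rw [← intervalIntegral.integral_of_le haa1, intervalIntegral.integral_const_mul,
          integral_inv_of_pos ha0 one_pos]
        congr 1
        rw [hadef, one_div, ← Real.exp_neg, Real.log_exp, neg_neg]
      rw [hcalc] at hmono
      exact hmono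
    have hEbound : E ≤ a + K * (lam * δ) := by
      rw [hlayer, hsplit]
      linarith
    have haK : a ≤ K := by
      rw [hadef, hKdef]
      apply Real.exp_le_exp.mpr
      have h4 : 4 * c' ≤ lam * δ ^ 2 := by
        rw [div_le_iff₀ (by positivity)] at hl2
        linarith
      have h5 : Real.sqrt (c' * lam) ≤ lam * δ / 2 := by
        rw [show lam * δ / 2 = Real.sqrt ((lam * δ / 2) ^ 2) from
          (Real.sqrt_sq (by positivity)).symm]
        apply Real.sqrt_le_sqrt
        have := mul_le_mul_of_nonneg_left h4 hlam0.le
        linarith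
      linarith
    have hpoly : 1 + lam * δ ≤ Real.exp (θ * Real.sqrt lam) := by
      set x : ℝ := θ * Real.sqrt lam with hxdef
      have hx0 : 0 ≤ x := by positivity
      have hcube : (x / 3) ^ 3 ≤ Real.exp x := by
        have h1 : Real.exp x = (Real.exp (x / 3)) ^ 3 := by
          rw [← Real.exp_nat_mul]
          congr 1
          push_cast
          ring
        rw [h1]
        apply pow_le_pow_left₀ (by positivity)
        linarith [Real.add_one_le_exp (x / 3)]
      have hsql : 27 * (1 + δ) / θ ^ 3 ≤ Real.sqrt lam := by
        have h2 := Real.sqrt_le_sqrt hl3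
        rwa [Real.sqrt_sq (by positivity)] at h2
      have hxeq : (x / 3) ^ 3 = θ ^ 3 * (Real.sqrt lam ^ 3) / 27 := by
        rw [hxdef]; ring
      have h3 : Real.sqrt lam ^ 3 = lam * Real.sqrt lam := by
        rw [pow_succ, Real.sq_sqrt hlam0.le]
      have h5 : lam * (27 * (1 + δ) / θ ^ 3) ≤ lam * Real.sqrt lam :=
        mul_le_mul_of_nonneg_left hsql hlam0.le
      have h7 : θ ^ 3 * (lam * (27 * (1 + δ) / θ ^ 3)) ≤ θ ^ 3 * (lam * Real.sqrt lam) :=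
        mul_le_mul_of_nonneg_left h5 (by positivity)
      have h8 : θ ^ 3 * (lam * (27 * (1 + δ) / θ ^ 3)) = 27 * (lam * (1 + δ)) := by
        field_simp
      have h9 : lam * (1 + δ) = lam + lam * δ := by ring
      have h10 : 1 + lam * δ ≤ (x / 3) ^ 3 := by
        rw [hxeq, h3]
        linarith
      linarith
    have hexpeq : θ * Real.sqrt lam + -(2 * Real.sqrt (c' * lam))
        = -(2 * (s - 2 * r) * Real.sqrt lam) := by
      rw [Real.sqrt_mul hc'pos.le, hc'def, Real.sqrt_sq hsr.le, hθdef]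
      ring
    have hEb3 : E ≤ Real.exp (-(2 * (s - 2 * r) * Real.sqrt lam)) := by
      have hEb2 : E ≤ Real.exp (θ * Real.sqrt lam) * K := by
        calc E ≤ a + K * (lam * δ) := hEbound
          _ ≤ K + K * (lam * δ) := by linarith
          _ = K * (1 + lam * δ) := by ring
          _ ≤ K * Real.exp (θ * Real.sqrt lam) :=
              mul_le_mul_of_nonneg_left hpoly (Real.exp_pos _).le
          _ = _ := by ring
      rw [hKdef, ← Real.exp_add, hexpeq] at hEb2
      exact hEb2
    have hlogE : Real.log E ≤ -(2 * (s - 2 * r) * Real.sqrt lam) := by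
      calc Real.log E ≤ Real.log (Real.exp (-(2 * (s - 2 * r) * Real.sqrt lam))) :=
            Real.log_le_log hEp hEb3
        _ = _ := Real.log_exp _
    have hF1 : (Real.sqrt lam)⁻¹ * Real.log E
        ≤ (Real.sqrt lam)⁻¹ * (-(2 * (s - 2 * r) * Real.sqrt lam)) :=
      mul_le_mul_of_nonneg_left hlogE (by positivity)
    have hF2 : (Real.sqrt lam)⁻¹ * (-(2 * (s - 2 * r) * Real.sqrt lam)) = -(2 * (s - 2 * r)) := by
      field_simp
    have : (Real.sqrt lam)⁻¹ * Real.log E ≤ -(2 * (s - 2 * r)) := by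
      rw [← hF2]; exact hF1
    calc (Real.sqrt lam)⁻¹ * Real.log E ≤ -(2 * (s - 2 * r)) := this
      _ ≤ -2 * s + ε := by linarith
  refine le_of_forall_pos_le_add fun ε hε => ?_
  exact limsup_le_of_le hcobdd (main ε hε)
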